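/- Define J : ℝ → ℝ by J(s) = 6s² + 20s + 17 for s ≤ −2, J(s) = (s+1)⁴ for −2 < s < −1, J(s) = 0 for −1 ≤ s ≤ 1, J(s) = (s−1)⁴ for 1 < s < 2, and J(s) = 6s² − 20s + 17 for s ≥ 2, let F₀(s) = ½(1 − s²), and for n ∈ ℕ, n ≥ 1, set F_n := F₀ + n·J. Then F_n is twice continuously differentiable, F_n(s) = F₀(s) for all s ∈ [−1, 1], F_n(s) ≥ −3/2 for all s ∈ ℝ, and −1 ≤ F_n''(s) ≤ 12n − 1 for all s ∈ ℝ. -/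

import Mathlib

open Set

/-- The piecewise-defined obstacle approximation function `J`. -/
noncomputable def obstacleApprox (s : ℝ) : ℝ :=
  if s ≤ -2 then 6 * s ^ 2 + 20 * s + 17
  else if s < -1 then (s + 1) ^ 4
  else if s ≤ 1 then 0
  else if s < 2 then (s - 1) ^ 4
  else 6 * s ^ 2 - 20 * s + 17

/-- First derivative of `J`. -/
noncomputable def obstacleApprox' (s : ℝ) : ℝ :=
  if s ≤ -2 then 12 * s + 20
  else if s < -1 then 4 * (s + 1) ^ 3
  else if s ≤ 1 then 0
  else if s < 2 then 4 * (s - 1) ^ 3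
  else 12 * s - 20

/-- Second derivative of `J`. -/
noncomputable def obstacleApprox'' (s : ℝ) : ℝ :=
  if s ≤ -2 then 12
  else if s < -1 then 12 * (s + 1) ^ 2
  else if s ≤ 1 then 0
  else if s < 2 then 12 * (s - 1) ^ 2
  else 12

/- Gluing lemmas -/
lemma hasDerivAt_of_eqOn_open {f g : ℝ → ℝ} {d x : ℝ} {s : Set ℝ}
    (hs : IsOpen s) (hx : x ∈ s) (h : Set.EqOn f g s) (hg : HasDerivAt g d x) :
    HasDerivAt f d x :=
  ((Filter.eventuallyEq_of_mem (hs.mem_nhds hx) h).hasDerivAt_iff).mpr hg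

lemma hasDerivAt_glue {f g₁ g₂ : ℝ → ℝ} {d x : ℝ} {s₁ s₂ : Set ℝ}
    (h₁ : Set.EqOn f g₁ s₁) (h₂ : Set.EqOn f g₂ s₂)
    (hx₁ : x ∈ s₁) (hx₂ : x ∈ s₂)
    (hg₁ : HasDerivAt g₁ d x) (hg₂ : HasDerivAt g₂ d x)
    (hnb : s₁ ∪ s₂ ∈ nhds x) : HasDerivAt f d x := by
  have H₁ : HasDerivWithinAt f d s₁ x :=
    (hg₁.hasDerivWithinAt).congr (fun y hy => (h₁ hy).symm ▸ rfl) (h₁ hx₁)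
  have H₂ : HasDerivWithinAt f d s₂ x :=
    (hg₂.hasDerivWithinAt).congr (fun y hy => (h₂ hy).symm ▸ rfl) (h₂ hx₂)
  exact (H₁.union H₂).hasDerivAt hnb

/- EqOn lemmas for J -/
lemma J_eq1 : Set.EqOn obstacleApprox (fun s => 6 * s ^ 2 + 20 * s + 17) (Iic (-2 : ℝ)) := by
  intro s hs; simp only [obstacleApprox]; rw [if_pos (show s ≤ -2 from hs)]

lemma J_eq2 : Set.EqOn obstacleApprox (fun s => (s + 1) ^ 4) (Icc (-2 : ℝ) (-1)) := by
  rintro s ⟨h1, h2⟩; simp only [obstacleApprox]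
  split_ifs with w1 w2 w3 w4
  · obtain rfl : s = -2 := le_antisymm w1 h1; norm_num
  · rfl
  · obtain rfl : s = -1 := le_antisymm h2 (not_lt.mp w2); norm_num
  · linarith
  · linarith

lemma J_eq3 : Set.EqOn obstacleApprox (fun _ => (0 : ℝ)) (Icc (-1 : ℝ) 1) := by
  rintro s ⟨h1, h2⟩; simp only [obstacleApprox]
  split_ifs <;> linarith

lemma J_eq4 : Set.EqOn obstacleApprox (fun s => (s - 1) ^ 4) (Icc (1 : ℝ) 2) := by
  rintro s ⟨h1, h2⟩; simp only [obstacleApprox]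
  split_ifs with w1 w2 w3 w4
  · linarith
  · linarith
  · obtain rfl : s = 1 := le_antisymm w3 h1; norm_num
  · rfl
  · obtain rfl : s = 2 := le_antisymm h2 (not_lt.mp w4); norm_num

lemma J_eq5 : Set.EqOn obstacleApprox (fun s => 6 * s ^ 2 - 20 * s + 17) (Ici (2 : ℝ)) := by
  intro s hs; simp only [obstacleApprox]
  rw [if_neg (by simp at hs ⊢; linarith), if_neg (by simp at hs ⊢; linarith),
    if_neg (by simp at hs ⊢; linarith), if_neg (not_lt.mpr hs)]

/- EqOn lemmas for J' -/
lemma J'_eq1 : Set.EqOn obstacleApprox' (fun s => 12 * s + 20) (Iic (-2 : ℝ)) := by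
  intro s hs; simp only [obstacleApprox']; rw [if_pos (show s ≤ -2 from hs)]

lemma J'_eq2 : Set.EqOn obstacleApprox' (fun s => 4 * (s + 1) ^ 3) (Icc (-2 : ℝ) (-1)) := by
  rintro s ⟨h1, h2⟩; simp only [obstacleApprox']
  split_ifs with w1 w2 w3 w4
  · obtain rfl : s = -2 := le_antisymm w1 h1; norm_num
  · rfl
  · obtain rfl : s = -1 := le_antisymm h2 (not_lt.mp w2); norm_num
  · linarith
  · linarith

lemma J'_eq3 : Set.EqOn obstacleApprox' (fun _ => (0 : ℝ)) (Icc (-1 : ℝ) 1) := by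
  rintro s ⟨h1, h2⟩; simp only [obstacleApprox']
  split_ifs <;> linarith

lemma J'_eq4 : Set.EqOn obstacleApprox' (fun s => 4 * (s - 1) ^ 3) (Icc (1 : ℝ) 2) := by
  rintro s ⟨h1, h2⟩; simp only [obstacleApprox']
  split_ifs with w1 w2 w3 w4
  · linarith
  · linarith
  · obtain rfl : s = 1 := le_antisymm w3 h1; norm_num
  · rfl
  · obtain rfl : s = 2 := le_antisymm h2 (not_lt.mp w4); norm_num

lemma J'_eq5 : Set.EqOn obstacleApprox' (fun s => 12 * s - 20) (Ici (2 : ℝ)) := by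
  intro s hs; simp only [obstacleApprox']
  rw [if_neg (by simp at hs ⊢; linarith), if_neg (by simp at hs ⊢; linarith),
    if_neg (by simp at hs ⊢; linarith), if_neg (not_lt.mpr hs)]

/- Polynomial derivatives -/
lemma hdA1 (x : ℝ) : HasDerivAt (fun s : ℝ => 6 * s ^ 2 + 20 * s + 17) (12 * x + 20) x := by
  have h := (((hasDerivAt_pow 2 x).const_mul (6 : ℝ)).add
    ((hasDerivAt_id x).const_mul (20 : ℝ))).add_const (17 : ℝ)
  refine h.congr_deriv ?_
  (try push_cast); (try simp only [id_eq]); ring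

lemma hdB1 (x : ℝ) : HasDerivAt (fun s : ℝ => (s + 1) ^ 4) (4 * (x + 1) ^ 3) x := by
  have h := ((hasDerivAt_id x).add_const (1 : ℝ)).pow 4
  refine h.congr_deriv ?_
  (try push_cast); (try simp only [id_eq]); ring

lemma hdD1 (x : ℝ) : HasDerivAt (fun s : ℝ => (s - 1) ^ 4) (4 * (x - 1) ^ 3) x := by
  have h := ((hasDerivAt_id x).sub_const (1 : ℝ)).pow 4
  refine h.congr_deriv ?_
  (try push_cast); (try simp only [id_eq]); ring

lemma hdE1 (x : ℝ) : HasDerivAt (fun s : ℝ => 6 * s ^ 2 - 20 * s + 17) (12 * x - 20) x := by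
  have h := (((hasDerivAt_pow 2 x).const_mul (6 : ℝ)).sub
    ((hasDerivAt_id x).const_mul (20 : ℝ))).add_const (17 : ℝ)
  refine h.congr_deriv ?_
  (try push_cast); (try simp only [id_eq]); ring

lemma hdA2 (x : ℝ) : HasDerivAt (fun s : ℝ => 12 * s + 20) (12 : ℝ) x := by
  have h := ((hasDerivAt_id x).const_mul (12 : ℝ)).add_const (20 : ℝ)
  refine h.congr_deriv ?_; (try push_cast); (try simp only [id_eq]); ring

lemma hdB2 (x : ℝ) : HasDerivAt (fun s : ℝ => 4 * (s + 1) ^ 3) (12 * (x + 1) ^ 2) x := by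
  have h := (((hasDerivAt_id x).add_const (1 : ℝ)).pow 3).const_mul (4 : ℝ)
  refine h.congr_deriv ?_
  (try push_cast); (try simp only [id_eq]); ring

lemma hdD2 (x : ℝ) : HasDerivAt (fun s : ℝ => 4 * (s - 1) ^ 3) (12 * (x - 1) ^ 2) x := by
  have h := (((hasDerivAt_id x).sub_const (1 : ℝ)).pow 3).const_mul (4 : ℝ)
  refine h.congr_deriv ?_
  (try push_cast); (try simp only [id_eq]); ring

lemma hdE2 (x : ℝ) : HasDerivAt (fun s : ℝ => 12 * s - 20) (12 : ℝ) x := by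
  have h := ((hasDerivAt_id x).const_mul (12 : ℝ)).sub_const (20 : ℝ)
  refine h.congr_deriv ?_; (try push_cast); (try simp only [id_eq]); ring

/- Derivative of J is J' -/
lemma J_hasDerivAt (x : ℝ) : HasDerivAt obstacleApprox (obstacleApprox' x) x := by
  rcases lt_trichotomy x (-2) with h | rfl | h
  · have hv : obstacleApprox' x = 12 * x + 20 := by
      simp only [obstacleApprox']; rw [if_pos h.le]
    rw [hv]
    exact hasDerivAt_of_eqOn_open isOpen_Iio h (J_eq1.mono Iio_subset_Iic_self) (hdA1 x)
  · have hv : obstacleApprox' (-2 : ℝ) = -4 := by norm_num [obstacleApprox']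
    rw [hv]
    refine hasDerivAt_glue J_eq1 J_eq2 (by norm_num) (by norm_num)
      (by convert hdA1 (-2) using 1; norm_num) (by convert hdB1 (-2) using 1; norm_num) ?_
    refine Filter.mem_of_superset (Iio_mem_nhds (by norm_num : (-2 : ℝ) < -1)) ?_
    intro y hy
    rcases le_or_gt y (-2) with h' | h'
    · exact Or.inl h'
    · exact Or.inr ⟨h'.le, le_of_lt hy⟩
  rcases lt_trichotomy x (-1) with h' | rfl | h'
  · have hv : obstacleApprox' x = 4 * (x + 1) ^ 3 := by
      simp only [obstacleApprox']; rw [if_neg (by linarith), if_pos h']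
    rw [hv]
    exact hasDerivAt_of_eqOn_open isOpen_Ioo ⟨h, h'⟩ (J_eq2.mono Ioo_subset_Icc_self) (hdB1 x)
  · have hv : obstacleApprox' (-1 : ℝ) = 0 := by norm_num [obstacleApprox']
    rw [hv]
    refine hasDerivAt_glue J_eq2 J_eq3 (by norm_num) (by norm_num)
      (by convert hdB1 (-1) using 1; norm_num) (hasDerivAt_const _ _) ?_
    refine Filter.mem_of_superset (Ioo_mem_nhds (by norm_num : (-2 : ℝ) < -1)
      (by norm_num : (-1 : ℝ) < 1)) ?_
    rintro y ⟨hy1, hy2⟩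
    rcases le_or_gt y (-1) with h'' | h''
    · exact Or.inl ⟨hy1.le, h''⟩
    · exact Or.inr ⟨h''.le, hy2.le⟩
  rcases lt_trichotomy x 1 with h'' | rfl | h''
  · have hv : obstacleApprox' x = 0 := by
      simp only [obstacleApprox']
      rw [if_neg (by linarith), if_neg (by linarith), if_pos h''.le]
    rw [hv]
    exact hasDerivAt_of_eqOn_open isOpen_Ioo ⟨h', h''⟩ (J_eq3.mono Ioo_subset_Icc_self)
      (hasDerivAt_const _ _)
  · have hv : obstacleApprox' (1 : ℝ) = 0 := by norm_num [obstacleApprox']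
    rw [hv]
    refine hasDerivAt_glue J_eq3 J_eq4 (by norm_num) (by norm_num)
      (hasDerivAt_const _ _) (by convert hdD1 1 using 1; norm_num) ?_
    refine Filter.mem_of_superset (Ioo_mem_nhds (by norm_num : (-1 : ℝ) < 1)
      (by norm_num : (1 : ℝ) < 2)) ?_
    rintro y ⟨hy1, hy2⟩
    rcases le_or_gt y 1 with h3 | h3
    · exact Or.inl ⟨hy1.le, h3⟩
    · exact Or.inr ⟨h3.le, hy2.le⟩
  rcases lt_trichotomy x 2 with h3 | rfl | h3
  · have hv : obstacleApprox' x = 4 * (x - 1) ^ 3 := by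
      simp only [obstacleApprox']
      rw [if_neg (by linarith), if_neg (by linarith), if_neg (by linarith), if_pos h3]
    rw [hv]
    exact hasDerivAt_of_eqOn_open isOpen_Ioo ⟨h'', h3⟩ (J_eq4.mono Ioo_subset_Icc_self) (hdD1 x)
  · have hv : obstacleApprox' (2 : ℝ) = 4 := by norm_num [obstacleApprox']
    rw [hv]
    refine hasDerivAt_glue J_eq4 J_eq5 (by norm_num) (by norm_num)
      (by convert hdD1 2 using 1; norm_num) (by convert hdE1 2 using 1; norm_num) ?_
    refine Filter.mem_of_superset (Ioi_mem_nhds (by norm_num : (1 : ℝ) < 2)) ?_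
    intro y hy
    rcases le_or_gt y 2 with h4 | h4
    · exact Or.inl ⟨le_of_lt hy, h4⟩
    · exact Or.inr h4.le
  · have hv : obstacleApprox' x = 12 * x - 20 := by
      simp only [obstacleApprox']
      rw [if_neg (by linarith), if_neg (by linarith), if_neg (by linarith),
        if_neg (not_lt.mpr h3.le)]
    rw [hv]
    exact hasDerivAt_of_eqOn_open isOpen_Ioi h3 (J_eq5.mono Ioi_subset_Ici_self) (hdE1 x)

/- Derivative of J' is J'' -/
lemma J'_hasDerivAt (x : ℝ) : HasDerivAt obstacleApprox' (obstacleApprox'' x) x := by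
  rcases lt_trichotomy x (-2) with h | rfl | h
  · have hv : obstacleApprox'' x = 12 := by
      simp only [obstacleApprox'']; rw [if_pos h.le]
    rw [hv]
    exact hasDerivAt_of_eqOn_open isOpen_Iio h (J'_eq1.mono Iio_subset_Iic_self) (hdA2 x)
  · have hv : obstacleApprox'' (-2 : ℝ) = 12 := by norm_num [obstacleApprox'']
    rw [hv]
    refine hasDerivAt_glue J'_eq1 J'_eq2 (by norm_num) (by norm_num)
      (hdA2 (-2)) (by convert hdB2 (-2) using 1; norm_num) ?_
    refine Filter.mem_of_superset (Iio_mem_nhds (by norm_num : (-2 : ℝ) < -1)) ?_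
    intro y hy
    rcases le_or_gt y (-2) with h' | h'
    · exact Or.inl h'
    · exact Or.inr ⟨h'.le, le_of_lt hy⟩
  rcases lt_trichotomy x (-1) with h' | rfl | h'
  · have hv : obstacleApprox'' x = 12 * (x + 1) ^ 2 := by
      simp only [obstacleApprox'']; rw [if_neg (by linarith), if_pos h']
    rw [hv]
    exact hasDerivAt_of_eqOn_open isOpen_Ioo ⟨h, h'⟩ (J'_eq2.mono Ioo_subset_Icc_self) (hdB2 x)
  · have hv : obstacleApprox'' (-1 : ℝ) = 0 := by norm_num [obstacleApprox'']
    rw [hv]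
    refine hasDerivAt_glue J'_eq2 J'_eq3 (by norm_num) (by norm_num)
      (by convert hdB2 (-1) using 1; norm_num) (hasDerivAt_const _ _) ?_
    refine Filter.mem_of_superset (Ioo_mem_nhds (by norm_num : (-2 : ℝ) < -1)
      (by norm_num : (-1 : ℝ) < 1)) ?_
    rintro y ⟨hy1, hy2⟩
    rcases le_or_gt y (-1) with h'' | h''
    · exact Or.inl ⟨hy1.le, h''⟩
    · exact Or.inr ⟨h''.le, hy2.le⟩
  rcases lt_trichotomy x 1 with h'' | rfl | h''
  · have hv : obstacleApprox'' x = 0 := by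
      simp only [obstacleApprox'']
      rw [if_neg (by linarith), if_neg (by linarith), if_pos h''.le]
    rw [hv]
    exact hasDerivAt_of_eqOn_open isOpen_Ioo ⟨h', h''⟩ (J'_eq3.mono Ioo_subset_Icc_self)
      (hasDerivAt_const _ _)
  · have hv : obstacleApprox'' (1 : ℝ) = 0 := by norm_num [obstacleApprox'']
    rw [hv]
    refine hasDerivAt_glue J'_eq3 J'_eq4 (by norm_num) (by norm_num)
      (hasDerivAt_const _ _) (by convert hdD2 1 using 1; norm_num) ?_
    refine Filter.mem_of_superset (Ioo_mem_nhds (by norm_num : (-1 : ℝ) < 1)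
      (by norm_num : (1 : ℝ) < 2)) ?_
    rintro y ⟨hy1, hy2⟩
    rcases le_or_gt y 1 with h3 | h3
    · exact Or.inl ⟨hy1.le, h3⟩
    · exact Or.inr ⟨h3.le, hy2.le⟩
  rcases lt_trichotomy x 2 with h3 | rfl | h3
  · have hv : obstacleApprox'' x = 12 * (x - 1) ^ 2 := by
      simp only [obstacleApprox'']
      rw [if_neg (by linarith), if_neg (by linarith), if_neg (by linarith), if_pos h3]
    rw [hv]
    exact hasDerivAt_of_eqOn_open isOpen_Ioo ⟨h'', h3⟩ (J'_eq4.mono Ioo_subset_Icc_self) (hdD2 x)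
  · have hv : obstacleApprox'' (2 : ℝ) = 12 := by norm_num [obstacleApprox'']
    rw [hv]
    refine hasDerivAt_glue J'_eq4 J'_eq5 (by norm_num) (by norm_num)
      (by convert hdD2 2 using 1; norm_num) (hdE2 2) ?_
    refine Filter.mem_of_superset (Ioi_mem_nhds (by norm_num : (1 : ℝ) < 2)) ?_
    intro y hy
    rcases le_or_gt y 2 with h4 | h4
    · exact Or.inl ⟨le_of_lt hy, h4⟩
    · exact Or.inr h4.le
  · have hv : obstacleApprox'' x = 12 := by
      simp only [obstacleApprox'']
      rw [if_neg (by linarith), if_neg (by linarith), if_neg (by linarith),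
        if_neg (not_lt.mpr h3.le)]
    rw [hv]
    exact hasDerivAt_of_eqOn_open isOpen_Ioi h3 (J'_eq5.mono Ioi_subset_Ici_self) (hdE2 x)

/- Continuity of J'' -/
lemma J''_repr : obstacleApprox'' = fun s => 12 * (min (max (s - 1) (max (-1 - s) 0)) 1) ^ 2 := by
  funext s
  simp only [obstacleApprox'']
  split_ifs with h1 h2 h3 h4
  · rw [max_eq_left (by linarith : (0 : ℝ) ≤ -1 - s),
      max_eq_right (by linarith : s - 1 ≤ -1 - s),
      min_eq_right (by linarith : (1 : ℝ) ≤ -1 - s)]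
    norm_num
  · rw [max_eq_left (by linarith : (0 : ℝ) ≤ -1 - s),
      max_eq_right (by linarith : s - 1 ≤ -1 - s),
      min_eq_left (by linarith : -1 - s ≤ (1 : ℝ))]
    ring
  · rw [max_eq_right (by linarith : -1 - s ≤ (0 : ℝ)),
      max_eq_right (by linarith : s - 1 ≤ (0 : ℝ)),
      min_eq_left (by norm_num : (0 : ℝ) ≤ 1)]
    ring
  · rw [max_eq_right (by linarith : -1 - s ≤ (0 : ℝ)),
      max_eq_left (by linarith : (0 : ℝ) ≤ s - 1),
      min_eq_left (by linarith : s - 1 ≤ (1 : ℝ))]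
  · rw [max_eq_right (by linarith : -1 - s ≤ (0 : ℝ)),
      max_eq_left (by linarith : (0 : ℝ) ≤ s - 1),
      min_eq_right (by linarith : (1 : ℝ) ≤ s - 1)]
    norm_num

lemma J''_continuous : Continuous obstacleApprox'' := by
  rw [J''_repr]
  fun_prop

/- Bounds -/
lemma J_nonneg (s : ℝ) : 0 ≤ obstacleApprox s := by
  simp only [obstacleApprox]
  split_ifs <;> nlinarith [sq_nonneg (s + 2), sq_nonneg (s - 2), sq_nonneg ((s + 1) ^ 2),
    sq_nonneg ((s - 1) ^ 2)]

lemma J''_nonneg (s : ℝ) : 0 ≤ obstacleApprox'' s := by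
  simp only [obstacleApprox'']
  split_ifs <;> nlinarith [sq_nonneg (s + 1), sq_nonneg (s - 1)]

lemma J''_le (s : ℝ) : obstacleApprox'' s ≤ 12 := by
  simp only [obstacleApprox'']
  split_ifs <;> nlinarith [sq_nonneg (s + 1), sq_nonneg (s - 1)]

lemma J_lower (s : ℝ) : -(3 / 2 : ℝ) ≤ 1 / 2 * (1 - s ^ 2) + obstacleApprox s := by
  simp only [obstacleApprox]
  split_ifs <;> nlinarith [sq_nonneg (s + 2), sq_nonneg (s - 2), sq_nonneg ((s + 1) ^ 2),
    sq_nonneg ((s - 1) ^ 2)]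

/-- The approximating potentials `F_n = F₀ + nJ` (with `F₀(s) = ½(1-s²)`) are `C²`,
agree with `F₀` on `[-1,1]`, are bounded below by `-3/2`, and satisfy the two-sided
Hessian bound `-1 ≤ F_n'' ≤ 12n - 1`. -/
theorem approximating_potential_properties
    (n : ℕ) (hn : 1 ≤ n) (F₀ Fn : ℝ → ℝ)
    (hF₀ : ∀ s : ℝ, F₀ s = (1 / 2) * (1 - s ^ 2))
    (hFn : ∀ s : ℝ, Fn s = F₀ s + (n : ℝ) * obstacleApprox s) :
    ContDiff ℝ 2 Fn ∧
    (∀ s : ℝ, s ∈ Set.Icc (-1 : ℝ) 1 → Fn s = F₀ s) ∧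
    (∀ s : ℝ, -(3 / 2) ≤ Fn s) ∧
    (∀ s : ℝ, -1 ≤ deriv (deriv Fn) s ∧ deriv (deriv Fn) s ≤ 12 * (n : ℝ) - 1) := by
  have hn' : (1 : ℝ) ≤ (n : ℝ) := by exact_mod_cast hn
  -- derivative computations
  have hFnD : ∀ x : ℝ, HasDerivAt Fn (-x + (n : ℝ) * obstacleApprox' x) x := by
    intro x
    have hFe : Fn = fun s => 1 / 2 * (1 - s ^ 2) + (n : ℝ) * obstacleApprox s := by
      funext s; rw [hFn, hF₀]
    rw [hFe]
    have h1 : HasDerivAt (fun s : ℝ => 1 / 2 * (1 - s ^ 2)) (-x) x := by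
      have h := ((hasDerivAt_const x (1 : ℝ)).sub (hasDerivAt_pow 2 x)).const_mul (1 / 2 : ℝ)
      refine h.congr_deriv ?_
      (try push_cast); (try simp only [id_eq]); ring
    exact h1.add ((J_hasDerivAt x).const_mul _)
  have hderiv1 : deriv Fn = fun x => -x + (n : ℝ) * obstacleApprox' x :=
    funext fun x => (hFnD x).deriv
  have hFnD2 : ∀ x : ℝ, HasDerivAt (deriv Fn) (-1 + (n : ℝ) * obstacleApprox'' x) x := by
    intro x
    rw [hderiv1]
    exact (hasDerivAt_id x).neg.add ((J'_hasDerivAt x).const_mul _)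
  have hderiv2 : deriv (deriv Fn) = fun x => -1 + (n : ℝ) * obstacleApprox'' x :=
    funext fun x => (hFnD2 x).deriv
  refine ⟨?_, ?_, ?_, ?_⟩
  · -- C²
    rw [show (2 : WithTop ℕ∞) = 1 + 1 from rfl, contDiff_succ_iff_deriv]
    refine ⟨fun x => (hFnD x).differentiableAt, by simp, ?_⟩
    rw [show (1 : WithTop ℕ∞) = 0 + 1 from rfl, contDiff_succ_iff_deriv]
    refine ⟨fun x => (hFnD2 x).differentiableAt, by simp, ?_⟩
    rw [contDiff_zero, hderiv2]
    exact continuous_const.add (continuous_const.mul J''_continuous)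
  · -- agreement on [-1,1]
    intro s hs
    rw [hFn, J_eq3 hs]
    ring
  · -- lower bound
    intro s
    rw [hFn, hF₀]
    have h1 : obstacleApprox s ≤ (n : ℝ) * obstacleApprox s := by
      nlinarith [J_nonneg s]
    have := J_lower s
    linarith
  · -- Hessian bounds
    intro s
    have h2s : deriv (deriv Fn) s = -1 + (n : ℝ) * obstacleApprox'' s := by
      rw [hderiv2]
    rw [h2s]
    have hn0 : (0 : ℝ) ≤ (n : ℝ) := by positivity
    constructor
    · have := mul_nonneg hn0 (J''_nonneg s)
      linarith
    · have := mul_le_mul_of_nonneg_left (J''_le s) hn0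
      linarith
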